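/- Let L be a finite graded distributive lattice and let K be a full-length sublattice of L. For each join-irreducible x of L, let w_x denote the unique minimal element of {y ∈ K : x ≤ y}. Then the map x ↦ w_x is a bijection from the set of join-irreducible elements of L onto the set of join-irreducible elements of K, and it is order-preserving: if x ≤ x' in L (both join irreducible in L), then w_x ≤ w_{x'}. -/

import Mathlib

/-- `CovByIn K x y`: `y` covers `x` within the subposet `K` (induced order). -/
def CovByIn {L : Type*} [Lattice L] (K : Set L) (x y : L) : Prop :=
  x ∈ K ∧ y ∈ K ∧ x < y ∧ ∀ z ∈ K, x < z → ¬ z < y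

/-- Join irreducibility in a lattice with least element `⊥`. -/
def JoinIrred {L : Type*} [Lattice L] [OrderBot L] (x : L) : Prop :=
  x ≠ ⊥ ∧ ∀ y z : L, x = y ⊔ z → x = y ∨ x = z

/-- Join irreducibility within a sublattice `K` whose minimum element is `mK`. -/
def JoinIrredIn {L : Type*} [Lattice L] (K : Set L) (mK : L) (w : L) : Prop :=
  w ∈ K ∧ w ≠ mK ∧ ∀ y ∈ K, ∀ z ∈ K, w = y ⊔ z → w = y ∨ w = z

/-- In a distributive lattice, join irreducibles are join prime. -/
lemma joinIrred_prime {L : Type*} [DistribLattice L] [OrderBot L] {x y z : L}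
    (hx : JoinIrred x) (h : x ≤ y ⊔ z) : x ≤ y ∨ x ≤ z := by
  have hx' : x = (x ⊓ y) ⊔ (x ⊓ z) := by
    rw [← inf_sup_left]
    exact (inf_eq_left.mpr h).symm
  rcases hx.2 _ _ hx' with h1 | h1
  · exact Or.inl (h1 ▸ inf_le_right)
  · exact Or.inr (h1 ▸ inf_le_right)

/-- Every element is dominated by anything dominating all join irreducibles below it. -/
lemma le_of_joinIrred_le {L : Type*} [DistribLattice L] [BoundedOrder L] [Fintype L] :
    ∀ u v : L, (∀ x : L, JoinIrred x → x ≤ u → x ≤ v) → u ≤ v := by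
  intro u
  induction u using WellFoundedLT.induction with
  | _ u IH =>
    intro v h
    by_cases hb : u = ⊥
    · simp [hb]
    by_cases hji : JoinIrred u
    · exact h u hji le_rfl
    · have : ∃ y z : L, u = y ⊔ z ∧ u ≠ y ∧ u ≠ z := by
        by_contra hcon
        push_neg at hcon
        exact hji ⟨hb, fun y z hyz => by
          by_cases hy : u = y
          · exact Or.inl hy
          · exact Or.inr (hcon y z hyz hy)⟩
      obtain ⟨y, z, hyz, hy, hz⟩ := this
      have hyu : y < u := lt_of_le_of_ne (hyz ▸ le_sup_left) (Ne.symm hy)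
      have hzu : z < u := lt_of_le_of_ne (hyz ▸ le_sup_right) (Ne.symm hz)
      have h1 : y ≤ v := IH y hyu v (fun x hx hxy => h x hx (hxy.trans hyu.le))
      have h2 : z ≤ v := IH z hzu v (fun x hx hxz => h x hx (hxz.trans hzu.le))
      exact hyz ▸ sup_le h1 h2

theorem stmt_13 {L : Type*} [DistribLattice L] [BoundedOrder L] [Fintype L]
    (ρL : L → ℕ) (hbot : ρL ⊥ = 0) (hcov : ∀ x y : L, x ⋖ y → ρL y = ρL x + 1)
    (K : Set L) (hK : ∀ x ∈ K, ∀ y ∈ K, x ⊔ y ∈ K ∧ x ⊓ y ∈ K)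
    (mK MK : L) (hmK : mK ∈ K) (hMK : MK ∈ K)
    (hmin : ∀ x ∈ K, mK ≤ x) (hmax : ∀ x ∈ K, x ≤ MK)
    (ρK : L → ℕ) (hKbot : ρK mK = 0)
    (hKcov : ∀ x y : L, CovByIn K x y → ρK y = ρK x + 1)
    (hlen : ρK MK = ρL ⊤)
    (w : L → L)
    (hw : ∀ x : L, JoinIrred x →
      w x ∈ K ∧ x ≤ w x ∧ ∀ y ∈ K, x ≤ y → ¬ y < w x) :
    (∀ x : L, JoinIrred x → JoinIrredIn K mK (w x)) ∧
    (∀ x x' : L, JoinIrred x → JoinIrred x' → w x = w x' → x = x') ∧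
    (∀ u : L, JoinIrredIn K mK u → ∃ x : L, JoinIrred x ∧ w x = u) ∧
    (∀ x x' : L, JoinIrred x → JoinIrred x' → x ≤ x' → w x ≤ w x') := by
  classical
  -- ρL is strictly monotone
  have hmonoL : ∀ y x : L, x < y → ρL x < ρL y := by
    intro y
    induction y using WellFoundedLT.induction with
    | _ y IH =>
      intro x hxy
      obtain ⟨z, hz, hzmax⟩ :=
        (Finset.univ.filter (fun z => x ≤ z ∧ z < y)).exists_maximal
          ⟨x, by simp [hxy]⟩
      simp only [Finset.mem_filter, Finset.mem_univ, true_and] at hz hzmax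
      have hcovz : z ⋖ y := by
        refine ⟨hz.2, fun c hzc hcy => not_lt_of_ge (hzmax ⟨hz.1.trans hzc.le, hcy⟩ hzc.le) hzc⟩
      have hry : ρL y = ρL z + 1 := hcov z y hcovz
      rcases eq_or_lt_of_le hz.1 with heq | hlt
      · rw [heq]; omega
      · have := IH z hz.2 x hlt
        omega
  -- w x is the minimum of elements of K above x
  have hwmin : ∀ x : L, JoinIrred x → ∀ y ∈ K, x ≤ y → w x ≤ y := by
    intro x hx y hy hxy
    obtain ⟨hwK, hxw, hmin'⟩ := hw x hx
    have hm := (hK (w x) hwK y hy).2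
    have hne : ¬ (w x ⊓ y < w x) := hmin' _ hm (le_inf hxw hxy)
    have heq : w x ⊓ y = w x := by
      rcases eq_or_lt_of_le (inf_le_left : w x ⊓ y ≤ w x) with h | h
      · exact h
      · exact absurd h hne
    exact inf_eq_left.mp heq
  -- ρK is dominated by ρL on K (from below)
  have hD : ∀ u : L, u ∈ K → ρL mK + ρK u ≤ ρL u := by
    intro u
    induction u using WellFoundedLT.induction with
    | _ u IH =>
      intro hu
      by_cases h : u = mK
      · subst h; simp [hKbot]
      · have hmu : mK < u := lt_of_le_of_ne (hmin u hu) (Ne.symm h)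
        obtain ⟨z, hz, hzmax⟩ :=
          (Finset.univ.filter (fun z => z ∈ K ∧ z < u)).exists_maximal
            ⟨mK, by simp [hmK, hmu]⟩
        simp only [Finset.mem_filter, Finset.mem_univ, true_and] at hz hzmax
        have hcb : CovByIn K z u :=
          ⟨hz.1, hu, hz.2, fun c hc hzc hcu => not_lt_of_ge (hzmax ⟨hc, hcu⟩ hzc.le) hzc⟩
        have h1 := hKcov z u hcb
        have h2 := IH z hz.2 hz.1
        have h3 := hmonoL u z hz.2
        omega
  -- ρK is dominated by ρL on K (from above)
  have hE : ∀ u : L, u ∈ K → ρK MK + ρL u ≤ ρK u + ρL MK := by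
    intro u
    induction u using WellFoundedGT.induction with
    | _ u IH =>
      intro hu
      by_cases h : u = MK
      · subst h; omega
      · have hmu : u < MK := lt_of_le_of_ne (hmax u hu) h
        obtain ⟨z, hz, hzmin⟩ :=
          (Finset.univ.filter (fun z => z ∈ K ∧ u < z)).exists_minimal
            ⟨MK, by simp [hMK, hmu]⟩
        simp only [Finset.mem_filter, Finset.mem_univ, true_and] at hz hzmin
        have hcb : CovByIn K u z :=
          ⟨hu, hz.1, hz.2, fun c hc huc hcz => not_lt_of_ge (hzmin ⟨hc, huc⟩ hcz.le) hcz⟩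
        have h1 := hKcov u z hcb
        have h2 := IH z hz.2 hz.1
        have h3 := hmonoL z u hz.2
        omega
  have hDMK := hD MK hMK
  have hLMKle : ρL MK ≤ ρL ⊤ := by
    rcases eq_or_lt_of_le (le_top : MK ≤ ⊤) with h | h
    · rw [h]
    · exact (hmonoL ⊤ MK h).le
  have hmK0 : ρL mK = 0 := by omega
  have hmKbot : mK = ⊥ := by
    by_contra h
    have : ⊥ < mK := Ne.bot_lt h
    have := hmonoL mK ⊥ this
    omega
  have hMKtop : MK = ⊤ := by
    by_contra h
    have : MK < ⊤ := Ne.lt_top h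
    have := hmonoL ⊤ MK this
    omega
  -- ρK = ρL on K
  have hrkeq : ∀ u ∈ K, ρK u = ρL u := by
    intro u hu
    have h1 := hD u hu
    have h2 := hE u hu
    have h4 : ρL MK = ρL ⊤ := by rw [hMKtop]
    omega
  -- covers in K are covers in L
  have hcovKL : ∀ a b : L, CovByIn K a b → a ⋖ b := by
    rintro a b ⟨ha, hb, hab, hmaxx⟩
    refine ⟨hab, fun c hac hcb => ?_⟩
    have h1 := hKcov a b ⟨ha, hb, hab, hmaxx⟩
    rw [hrkeq a ha, hrkeq b hb] at h1
    have h2 := hmonoL c a hac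
    have h3 := hmonoL b c hcb
    omega
  -- every element of K other than mK covers some element within K
  have hKcovEx : ∀ u ∈ K, u ≠ mK → ∃ z, CovByIn K z u := by
    intro u hu hne
    have hmu : mK < u := lt_of_le_of_ne (hmin u hu) (Ne.symm hne)
    obtain ⟨z, hz, hzmax⟩ :=
      (Finset.univ.filter (fun z => z ∈ K ∧ z < u)).exists_maximal
        ⟨mK, by simp [hmK, hmu]⟩
    simp only [Finset.mem_filter, Finset.mem_univ, true_and] at hz hzmax
    exact ⟨z, hz.1, hu, hz.2, fun c hc hzc hcu => not_lt_of_ge (hzmax ⟨hc, hcu⟩ hzc.le) hzc⟩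
  -- for a cover a ⋖ b there is a unique join irreducible below b not below a
  have hJIcov : ∀ a b : L, a ⋖ b →
      ∃ x, JoinIrred x ∧ x ≤ b ∧ ¬ x ≤ a ∧
        ∀ x', JoinIrred x' → x' ≤ b → ¬ x' ≤ a → x' = x := by
    intro a b hab
    have hex : ∃ x, JoinIrred x ∧ x ≤ b ∧ ¬ x ≤ a := by
      by_contra hcon
      push_neg at hcon
      have : b ≤ a := le_of_joinIrred_le b a (fun x hx hxb => hcon x hx hxb)
      exact absurd this (not_le_of_gt hab.1)
    obtain ⟨x, hx, hxb, hxa⟩ := hex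
    have hsup : ∀ x', JoinIrred x' → x' ≤ b → ¬ x' ≤ a → a ⊔ x' = b := by
      intro x' _ hxb' hxa'
      have h1 : a < a ⊔ x' := by
        rcases eq_or_lt_of_le (le_sup_left : a ≤ a ⊔ x') with h | h
        · exact absurd (h ▸ le_sup_right : x' ≤ a) hxa'
        · exact h
      have h2 : a ⊔ x' ≤ b := sup_le hab.1.le hxb'
      rcases eq_or_lt_of_le h2 with h | h
      · exact h
      · exact absurd h (hab.2 h1)
    refine ⟨x, hx, hxb, hxa, fun x' hx' hxb' hxa' => ?_⟩
    have e1 := hsup x hx hxb hxa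
    have e2 := hsup x' hx' hxb' hxa'
    have h1 : x' ≤ a ⊔ x := e1 ▸ hxb'
    have h2 : x ≤ a ⊔ x' := e2 ▸ hxb
    rcases joinIrred_prime hx' h1 with h | h
    · exact absurd h hxa'
    · rcases joinIrred_prime hx h2 with h' | h'
      · exact absurd h' hxa
      · exact le_antisymm h h'
  -- Part 1 : w x is join irreducible in K
  have part1 : ∀ x : L, JoinIrred x → JoinIrredIn K mK (w x) := by
    intro x hx
    obtain ⟨hwK, hxw, _⟩ := hw x hx
    refine ⟨hwK, ?_, ?_⟩
    · intro h
      rw [h, hmKbot] at hxw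
      exact hx.1 (le_bot_iff.mp hxw)
    · intro y hy z hz heq
      have hxyz : x ≤ y ⊔ z := heq ▸ hxw
      rcases joinIrred_prime hx hxyz with h | h
      · have := hwmin x hx y hy h
        exact Or.inl (le_antisymm this (heq ▸ le_sup_left))
      · have := hwmin x hx z hz h
        exact Or.inr (le_antisymm this (heq ▸ le_sup_right))
  refine ⟨part1, ?_, ?_, ?_⟩
  -- Part 2 : injectivity
  · intro x x' hx hx' hww
    obtain ⟨hwK, hxw, _⟩ := hw x hx
    obtain ⟨hwK', hxw', _⟩ := hw x' hx'
    have hji := part1 x hx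
    obtain ⟨z, hcb⟩ := hKcovEx (w x) hwK hji.2.1
    have hzL : z ⋖ w x := hcovKL z (w x) hcb
    obtain ⟨x0, hx0, hx0b, hx0a, huni⟩ := hJIcov z (w x) hzL
    have hxna : ¬ x ≤ z := by
      intro h
      have := hwmin x hx z hcb.1 h
      exact absurd hcb.2.2.1 (not_lt_of_ge this)
    have hxna' : ¬ x' ≤ z := by
      intro h
      have := hwmin x' hx' z hcb.1 h
      rw [← hww] at this
      exact absurd hcb.2.2.1 (not_lt_of_ge this)
    have e1 := huni x hx hxw hxna
    have e2 := huni x' hx' (hww ▸ hxw') hxna'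
    rw [e1, e2]
  -- Part 3 : surjectivity
  · intro u hu
    obtain ⟨huK, hune, hJI⟩ := hu
    obtain ⟨z, hcb⟩ := hKcovEx u huK hune
    have hzL : z ⋖ u := hcovKL z u hcb
    obtain ⟨x, hx, hxb, hxa, _⟩ := hJIcov z u hzL
    refine ⟨x, hx, ?_⟩
    obtain ⟨hwK, hxw, _⟩ := hw x hx
    have hwu : w x ≤ u := hwmin x hx u huK hxb
    have hsupK : z ⊔ w x ∈ K := (hK z hcb.1 (w x) hwK).1
    have h1 : z < z ⊔ w x := by
      rcases eq_or_lt_of_le (le_sup_left : z ≤ z ⊔ w x) with h | h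
      · exact absurd (hxw.trans (h ▸ le_sup_right : w x ≤ z)) hxa
      · exact h
    have h2 : z ⊔ w x ≤ u := sup_le hcb.2.2.1.le hwu
    have h3 : z ⊔ w x = u := by
      rcases eq_or_lt_of_le h2 with h | h
      · exact h
      · exact absurd h (hcb.2.2.2 (z ⊔ w x) hsupK h1)
    rcases hJI z hcb.1 (w x) hwK h3.symm with h | h
    · exact absurd h.symm (ne_of_lt hcb.2.2.1)
    · exact h.symm
  -- Part 4 : monotonicity
  · intro x x' hx hx' hle
    obtain ⟨hwK', hxw', _⟩ := hw x' hx'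
    exact hwmin x hx (w x') hwK' (hle.trans hxw')
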